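/- Let r, b be natural numbers with b ≤ r, and let f : 2^{[r]} → ℝ be a nonnegative, monotone, submodular set function. Let S_0, S_1, …, S_b be the sets produced by the greedy algorithm: S_0 = ∅, and for each k < b there is an element e_k ∉ S_k with S_{k+1} = S_k ∪ {e_k} such that f(S_k ∪ {e_k}) ≥ f(S_k ∪ {j}) for every j ∉ S_k. Then for every set T ⊆ [r] with |T| ≤ b, f(S_b) ≥ (1 − 1/e) · f(T), where e is Euler's number; in particular f(S_b) ≥ (1 − 1/e) · f(S*) for any optimal solution S* of maximizing f subject to the cardinality constraint |S| ≤ b. -/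

import Mathlib

lemma greedy_sum_marginal_bound (r : ℕ) (f : Finset (Fin r) → ℝ)
    (hsub : ∀ X Y : Finset (Fin r), f X + f Y ≥ f (X ∪ Y) + f (X ∩ Y))
    (Sk : Finset (Fin r)) :
    ∀ A : Finset (Fin r), (∀ a ∈ A, a ∉ Sk) →
      f (Sk ∪ A) ≤ f Sk + ∑ j ∈ A, (f (insert j Sk) - f Sk) := by
  intro A
  induction A using Finset.induction_on with
  | empty => intro _; simp
  | insert a A ha ih =>
    intro hdisj
    have haS : a ∉ Sk := hdisj a (Finset.mem_insert_self a A)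
    have haA : ∀ x ∈ A, x ∉ Sk := fun x hx => hdisj x (Finset.mem_insert_of_mem hx)
    have hU : Sk ∪ insert a A = (insert a Sk) ∪ (Sk ∪ A) := by
      ext x; simp [Finset.mem_union, Finset.mem_insert]
    have hI : (insert a Sk) ∩ (Sk ∪ A) = Sk := by
      ext x
      simp only [Finset.mem_inter, Finset.mem_insert, Finset.mem_union]
      constructor
      · rintro ⟨h1 | h1, h2 | h2⟩ <;> first | assumption | (subst h1; exact absurd h2 (by tauto))
      · tauto
    have hsub' := hsub (insert a Sk) (Sk ∪ A)
    rw [hI] at hsub'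
    have hsum : ∑ j ∈ insert a A, (f (insert j Sk) - f Sk)
        = (f (insert a Sk) - f Sk) + ∑ j ∈ A, (f (insert j Sk) - f Sk) :=
      Finset.sum_insert ha
    have hih := ih haA
    rw [hU, hsum]
    linarith

/-- Greedy guarantee for monotone submodular maximization under a
cardinality constraint: if `f` is nonnegative, monotone and submodular, and
`S_0 = ∅, S_1, …, S_b` is a greedy sequence (at each step `k < b` the added element
`e_k ∉ S_k` maximizes the marginal gain), then for every `T` with `|T| ≤ b`,
`f(S_b) ≥ (1 - 1/e) · f(T)`; in particular this holds for any optimal solution. -/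
theorem greedy_approximation_guarantee
    (r b : ℕ) (hb : b ≤ r)
    (f : Finset (Fin r) → ℝ)
    (hnonneg : ∀ S : Finset (Fin r), 0 ≤ f S)
    (hmono : ∀ X Y : Finset (Fin r), X ⊆ Y → f X ≤ f Y)
    (hsub : ∀ X Y : Finset (Fin r), f X + f Y ≥ f (X ∪ Y) + f (X ∩ Y))
    (S : ℕ → Finset (Fin r)) (e : ℕ → Fin r)
    (hS0 : S 0 = ∅)
    (hgreedy : ∀ k < b,
      e k ∉ S k ∧
      S (k + 1) = insert (e k) (S k) ∧
      ∀ j : Fin r, j ∉ S k → f (insert j (S k)) ≤ f (insert (e k) (S k))) :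
    ∀ T : Finset (Fin r), T.card ≤ b →
      (1 - 1 / Real.exp 1) * f T ≤ f (S b) := by
  intro T hT
  have hexp : (0:ℝ) < Real.exp 1 := Real.exp_pos 1
  rcases Nat.eq_zero_or_pos b with hb0 | hbpos
  · subst hb0
    have hT0 : T = ∅ := Finset.card_eq_zero.mp (Nat.le_zero.mp hT)
    subst hT0
    rw [hS0]
    have h1 : (0:ℝ) ≤ 1 / Real.exp 1 := by positivity
    nlinarith [hnonneg (∅ : Finset (Fin r))]
  -- main case: b ≥ 1
  have hB1 : (1:ℝ) ≤ (b:ℝ) := by exact_mod_cast hbpos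
  have hBpos : (0:ℝ) < (b:ℝ) := by linarith
  -- key per-step inequality
  have key : ∀ k < b, f T ≤ f (S k) + (b:ℝ) * (f (S (k+1)) - f (S k)) := by
    intro k hk
    obtain ⟨he, hSk1, hmax⟩ := hgreedy k hk
    have h1 : f T ≤ f (S k ∪ (T \ S k)) := by
      apply hmono
      intro x hx
      simp only [Finset.mem_union, Finset.mem_sdiff]
      by_cases hxS : x ∈ S k
      · exact Or.inl hxS
      · exact Or.inr ⟨hx, hxS⟩
    have h2 := greedy_sum_marginal_bound r f hsub (S k) (T \ S k)
      (fun a ha => (Finset.mem_sdiff.mp ha).2)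
    have hgain : 0 ≤ f (S (k+1)) - f (S k) := by
      rw [hSk1]
      linarith [hmono (S k) (insert (e k) (S k)) (Finset.subset_insert _ _)]
    have h3 : ∑ j ∈ T \ S k, (f (insert j (S k)) - f (S k))
        ≤ ((T \ S k).card : ℝ) * (f (S (k+1)) - f (S k)) := by
      rw [← nsmul_eq_mul]
      apply Finset.sum_le_card_nsmul
      intro j hj
      have hjn : j ∉ S k := (Finset.mem_sdiff.mp hj).2
      rw [hSk1]
      linarith [hmax j hjn]
    have hcard : ((T \ S k).card : ℝ) ≤ (b:ℝ) := by
      have : (T \ S k).card ≤ b := le_trans (Finset.card_le_card (Finset.sdiff_subset)) hT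
      exact_mod_cast this
    have h4 : ((T \ S k).card : ℝ) * (f (S (k+1)) - f (S k))
        ≤ (b:ℝ) * (f (S (k+1)) - f (S k)) :=
      mul_le_mul_of_nonneg_right hcard hgain
    linarith
  -- recursion on the deficit
  have hc0 : (0:ℝ) ≤ 1 - 1 / (b:ℝ) := by
    have : 1 / (b:ℝ) ≤ 1 := by
      rw [div_le_one hBpos]; exact hB1
    linarith
  have hrec : ∀ k < b, f T - f (S (k+1)) ≤ (1 - 1/(b:ℝ)) * (f T - f (S k)) := by
    intro k hk
    have h2 : (b:ℝ) * (f T - f (S (k+1))) ≤ ((b:ℝ) - 1) * (f T - f (S k)) := by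
      have := key k hk
      nlinarith
    have h3 : f T - f (S (k+1)) ≤ ((b:ℝ) - 1) * (f T - f (S k)) / (b:ℝ) := by
      rw [le_div_iff₀ hBpos]
      linarith [h2]
    have h4 : ((b:ℝ) - 1) * (f T - f (S k)) / (b:ℝ) = (1 - 1/(b:ℝ)) * (f T - f (S k)) := by
      field_simp
    linarith [h3, h4.le, h4.ge]
  have hind : ∀ k, k ≤ b → f T - f (S k) ≤ (1 - 1/(b:ℝ)) ^ k * f T := by
    intro k
    induction k with
    | zero =>
      intro _
      rw [hS0]
      simp only [pow_zero, one_mul]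
      linarith [hnonneg (∅ : Finset (Fin r))]
    | succ n ih =>
      intro h
      have hn : n < b := h
      calc f T - f (S (n+1)) ≤ (1 - 1/(b:ℝ)) * (f T - f (S n)) := hrec n hn
        _ ≤ (1 - 1/(b:ℝ)) * ((1 - 1/(b:ℝ)) ^ n * f T) :=
          mul_le_mul_of_nonneg_left (ih (le_of_lt hn)) hc0
        _ = (1 - 1/(b:ℝ)) ^ (n+1) * f T := by ring
  -- (1 - 1/b)^b ≤ 1/e
  have h1 : (1 : ℝ) - 1/(b:ℝ) ≤ Real.exp (-(1/(b:ℝ))) := by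
    have := Real.add_one_le_exp (-(1/(b:ℝ)))
    linarith
  have h2 : (1 - 1/(b:ℝ)) ^ b ≤ (Real.exp (-(1/(b:ℝ)))) ^ b := pow_le_pow_left₀ hc0 h1 b
  have h3 : (Real.exp (-(1/(b:ℝ)))) ^ b = Real.exp (-1 : ℝ) := by
    rw [← Real.exp_nat_mul]
    congr 1
    have hBne : (b:ℝ) ≠ 0 := ne_of_gt hBpos
    field_simp
  have h4 : Real.exp (-1 : ℝ) = 1 / Real.exp 1 := by
    rw [Real.exp_neg]; exact (one_div _).symm
  have hfinal := hind b le_rfl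
  have hTnn : 0 ≤ f T := hnonneg T
  have h5 : (1 - 1/(b:ℝ)) ^ b * f T ≤ (1 / Real.exp 1) * f T := by
    apply mul_le_mul_of_nonneg_right _ hTnn
    calc (1 - 1/(b:ℝ)) ^ b ≤ (Real.exp (-(1/(b:ℝ)))) ^ b := h2
      _ = Real.exp (-1:ℝ) := h3
      _ = 1 / Real.exp 1 := h4
  linarith
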